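/- Let H be Hall's universal group. Then H is generated by its elements of order 2: the subgroup of H generated by the set {x ∈ H : x ≠ 1 and x² = 1} is all of H. -/

import Mathlib

open Subgroup

/-- The underlying equivalence between `zpowers` of two elements of the same finite order. -/
noncomputable def zpEquiv {G : Type*} [Group G] {x y : G}
    (hx : IsOfFinOrder x) (hy : IsOfFinOrder y) (h : orderOf x = orderOf y) :
    ↥(Subgroup.zpowers x) ≃ ↥(Subgroup.zpowers y) :=
  (finEquivZPowers hx).symm.trans ((finCongr h).trans (finEquivZPowers hy))

theorem zpEquiv_apply_pow {G : Type*} [Group G] {x y : G}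
    (hx : IsOfFinOrder x) (hy : IsOfFinOrder y) (h : orderOf x = orderOf y)
    (m : ℕ) (hm : x ^ m ∈ Subgroup.zpowers x) :
    zpEquiv hx hy h ⟨x ^ m, hm⟩ = ⟨y ^ m, pow_mem (mem_zpowers y) m⟩ := by
  have hi : (⟨x ^ m, hm⟩ : ↥(Subgroup.zpowers x))
      = finEquivZPowers hx ⟨m % orderOf x, Nat.mod_lt m hx.orderOf_pos⟩ :=
    Subtype.ext (pow_mod_orderOf x m).symm
  rw [hi]
  have hcancel : zpEquiv hx hy h (finEquivZPowers hx ⟨m % orderOf x, Nat.mod_lt m hx.orderOf_pos⟩)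
      = finEquivZPowers hy (finCongr h ⟨m % orderOf x, Nat.mod_lt m hx.orderOf_pos⟩) := by
    simp [zpEquiv]
  rw [hcancel]
  refine Subtype.ext ?_
  show y ^ (m % orderOf x) = y ^ m
  rw [h, pow_mod_orderOf]

/-- A multiplicative equivalence between `zpowers` of two elements of the same finite order,
sending `x ^ m` to `y ^ m`. -/
noncomputable def zpowersMulEquiv {G : Type*} [Group G] {x y : G}
    (hx : IsOfFinOrder x) (hy : IsOfFinOrder y) (h : orderOf x = orderOf y) :
    ↥(Subgroup.zpowers x) ≃* ↥(Subgroup.zpowers y) := by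
  refine MulEquiv.mk' (zpEquiv hx hy h) ?_
  intro u v
  obtain ⟨m, hm⟩ := hx.mem_powers_iff_mem_zpowers.mpr u.2
  obtain ⟨k, hk⟩ := hx.mem_powers_iff_mem_zpowers.mpr v.2
  have hu : u = ⟨x ^ m, pow_mem (mem_zpowers x) m⟩ := by ext; exact hm.symm
  have hv : v = ⟨x ^ k, pow_mem (mem_zpowers x) k⟩ := by ext; exact hk.symm
  rw [hu, hv]
  have hmul : (⟨x ^ m, pow_mem (mem_zpowers x) m⟩ * ⟨x ^ k, pow_mem (mem_zpowers x) k⟩ :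
      ↥(Subgroup.zpowers x)) = ⟨x ^ (m + k), pow_mem (mem_zpowers x) (m + k)⟩ := by
    ext; exact (pow_add x m k).symm
  rw [hmul, zpEquiv_apply_pow, zpEquiv_apply_pow, zpEquiv_apply_pow]
  ext
  exact pow_add y m k

/-- **Hall's universal group is generated by its involutions.**
If `H` is Hall's universal group, then the subgroup generated by the elements of order `2`
is all of `H`. -/
theorem hall_generated_by_involutions
    {H : Type} [Group H] [Countable H]
    (hLF : ∀ s : Finset H, ((Subgroup.closure (s : Set H) : Subgroup H) : Set H).Finite)
    (hEmb : ∀ (G : Type) [Group G] [Finite G], ∃ e : G →* H, Function.Injective e)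
    (hHom : ∀ K L : Subgroup H, (K : Set H).Finite → (L : Set H).Finite →
      ∀ φ : ↥K ≃* ↥L, ∃ h : H, ∀ k : K, (φ k : H) = h * (k : H) * h⁻¹) :
    Subgroup.closure {x : H | x ≠ 1 ∧ x ^ 2 = 1} = ⊤ := by
  rw [eq_top_iff]
  rintro g -
  -- every element has finite order
  have hford : ∀ x : H, IsOfFinOrder x := by
    intro x
    have hfin : ((Subgroup.zpowers x : Subgroup H) : Set H).Finite := by
      have := hLF {x}
      simpa [Subgroup.zpowers_eq_closure] using this
    haveI : Finite ↥(Subgroup.zpowers x) := Set.Finite.to_subtype hfin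
    have : IsOfFinOrder (⟨x, Subgroup.mem_zpowers x⟩ : ↥(Subgroup.zpowers x)) :=
      isOfFinOrder_of_finite _
    simpa using (Subgroup.zpowers x).subtype.isOfFinOrder this
  by_cases hg1 : g = 1
  · simp [hg1, Subgroup.one_mem]
  set n := orderOf g with hn
  haveI : NeZero n := ⟨(hford g).orderOf_pos.ne'⟩
  obtain ⟨e, he⟩ := hEmb (DihedralGroup n)
  set a := e (DihedralGroup.r 1) with haa
  have horder : orderOf a = orderOf g := by
    rw [haa, orderOf_injective e he, DihedralGroup.orderOf_r_one]
  have hKfin : ((Subgroup.zpowers a : Subgroup H) : Set H).Finite := by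
    have := hLF {a}; simpa [Subgroup.zpowers_eq_closure] using this
  have hLfin : ((Subgroup.zpowers g : Subgroup H) : Set H).Finite := by
    have := hLF {g}; simpa [Subgroup.zpowers_eq_closure] using this
  obtain ⟨h, hh⟩ := hHom (Subgroup.zpowers a) (Subgroup.zpowers g) hKfin hLfin
    (zpowersMulEquiv (hford a) (hford g) horder)
  have hga : g = h * a * h⁻¹ := by
    have key := hh ⟨a, Subgroup.mem_zpowers a⟩
    have heq : (zpowersMulEquiv (hford a) (hford g) horder) ⟨a, Subgroup.mem_zpowers a⟩
        = ⟨g, Subgroup.mem_zpowers g⟩ := by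
      have h1 : (⟨a, Subgroup.mem_zpowers a⟩ : ↥(Subgroup.zpowers a))
          = ⟨a ^ (1 : ℕ), pow_mem (mem_zpowers a) 1⟩ := by ext; simp
      rw [h1]
      have h2 : (zpowersMulEquiv (hford a) (hford g) horder)
          ⟨a ^ (1 : ℕ), pow_mem (mem_zpowers a) 1⟩
          = zpEquiv (hford a) (hford g) horder ⟨a ^ (1 : ℕ), pow_mem (mem_zpowers a) 1⟩ := rfl
      rw [h2, zpEquiv_apply_pow]
      ext; simp
    rw [heq] at key
    simpa using key
  -- a = e (sr 0) * e (sr 1)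
  have hdecomp : a = e (DihedralGroup.sr 0) * e (DihedralGroup.sr 1) := by
    rw [haa, ← map_mul, DihedralGroup.sr_mul_sr]
    norm_num
  have hinv : ∀ i : ZMod n, h * e (DihedralGroup.sr i) * h⁻¹ ∈
      Subgroup.closure {x : H | x ≠ 1 ∧ x ^ 2 = 1} := by
    intro i
    apply Subgroup.subset_closure
    have ho : orderOf (e (DihedralGroup.sr i)) = 2 := by
      rw [orderOf_injective e he, DihedralGroup.orderOf_sr]
    constructor
    · intro hcon
      have hx1 : e (DihedralGroup.sr i) = 1 := by
        have := congrArg (fun z => h⁻¹ * z * h) hcon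
        simpa [mul_assoc] using this
      rw [hx1, orderOf_one] at ho
      norm_num at ho
    · have hsq : (e (DihedralGroup.sr i)) ^ 2 = 1 := by
        rw [← ho]; exact pow_orderOf_eq_one _
      calc (h * e (DihedralGroup.sr i) * h⁻¹) ^ 2
          = h * (e (DihedralGroup.sr i)) ^ 2 * h⁻¹ := by
            rw [pow_two, pow_two]; simp [mul_assoc]
        _ = 1 := by rw [hsq]; simp
  have hfinal : g = (h * e (DihedralGroup.sr 0) * h⁻¹) * (h * e (DihedralGroup.sr 1) * h⁻¹) := by
    rw [hga, hdecomp]; group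
  rw [hfinal]
  exact mul_mem (hinv 0) (hinv 1)
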